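/- Let n ≥ 2 be an integer and n′ = n/(n−1). Let A be a finite-valued Young function satisfying the ∇₂-condition globally, with Young conjugate Ã, and let N be a Young function satisfying condition (G). Let Θ(s) = s A⁻¹( (1/s) ∫_{s^{−1/n′}}^∞ Ã( r ∫₀^{1/r} N⁻¹(1/ρ) dρ ) r^{−(n′+1)} dr ). Then lim_{s→0⁺} Θ(s) = 0 and Θ is strictly increasing on the interval near 0 where it is finite. -/

import Mathlib

open MeasureTheory Set Filter
open scoped ENNReal

/-- A finite-valued Young function: convex, vanishing at `0`, nonnegative on `[0,∞)`,
and not identically zero there. -/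
structure IsYoung (A : ℝ → ℝ) : Prop where
  zero : A 0 = 0
  nonneg : ∀ t, 0 ≤ t → 0 ≤ A t
  convex : ConvexOn ℝ (Set.Ici 0) A
  nontrivial : ∃ t, 0 < t ∧ 0 < A t

/-- The Young conjugate `Ã(x) = sup { x t − A(t) : t ≥ 0 }`, with values in `[0,∞]`. -/
noncomputable def conjE (A : ℝ → ℝ) (x : ℝ≥0∞) : ℝ≥0∞ :=
  ⨆ t : {t : ℝ // 0 ≤ t}, (x * ENNReal.ofReal t.1 - ENNReal.ofReal (A t.1))

/-- The generalized right-continuous inverse `F⁻¹(t) = inf { s ≥ 0 : F(s) > t }`. -/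
noncomputable def rcInv (F : ℝ → ℝ) (t : ℝ) : ℝ :=
  sInf {s : ℝ | 0 ≤ s ∧ t < F s}

/-- The generalized right-continuous inverse of a Young function, acting on `[0,∞]`:
`A⁻¹(t) = inf { x ≥ 0 : A(x) > t }` (with `inf ∅ = ∞`). -/
noncomputable def einv (A : ℝ → ℝ) (t : ℝ≥0∞) : ℝ≥0∞ :=
  sInf {x : ℝ≥0∞ | t < ENNReal.ofReal (A x.toReal)}

/-- `Ξ(s) = (1/s) ∫_{s^{−1/n′}}^∞ Ã( r ∫₀^{1/r} N⁻¹(1/ρ) dρ ) r^{−(n′+1)} dr`,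
where `n′ = n/(n−1)`. -/
noncomputable def Xi (A N : ℝ → ℝ) (n : ℕ) (s : ℝ) : ℝ≥0∞ :=
  (ENNReal.ofReal s)⁻¹ *
    ∫⁻ r in Set.Ioi (s ^ (-(((n:ℝ)-1)/n))),
      conjE A (ENNReal.ofReal r *
          ∫⁻ ρ in Set.Ioc (0:ℝ) (1/r), ENNReal.ofReal (rcInv N (1/ρ))) *
        ENNReal.ofReal (r ^ (-((n:ℝ)/((n:ℝ)-1) + 1)))

/-- `Θ(s) = s A⁻¹(Ξ(s))`. -/
noncomputable def Theta (A N : ℝ → ℝ) (n : ℕ) (s : ℝ) : ℝ≥0∞ :=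
  ENNReal.ofReal s * einv A (Xi A N n s)

/-- Condition (G): `∫₀ s^{−1/n′} A⁻¹(Ξ(s)) ds < ∞` near zero. -/
def CondG (A N : ℝ → ℝ) (n : ℕ) : Prop :=
  ∃ δ > (0:ℝ),
    (∫⁻ s in Set.Ioc (0:ℝ) δ,
      ENNReal.ofReal (s ^ (-(((n:ℝ)-1)/n))) * einv A (Xi A N n s)) < ⊤

/-- `A` satisfies the `∇₂`-condition globally. -/
def Nabla2Global (A : ℝ → ℝ) : Prop :=
  ∃ c > (2:ℝ), ∀ t ≥ (0:ℝ), c * A t ≤ A (2 * t)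

section Young
variable {A : ℝ → ℝ} (hA : IsYoung A)

/-- superadditivity-type scaling: `lam * A t ≤ A (lam * t)` for `lam ≥ 1`. -/
lemma young_scale (hA : IsYoung A) {lam t : ℝ} (hlam : 1 ≤ lam) (ht : 0 ≤ t) :
    lam * A t ≤ A (lam * t) := by
  have hlam0 : 0 < lam := lt_of_lt_of_le one_pos hlam
  have h1 : (1/lam) • (lam * t) + (1 - 1/lam) • (0:ℝ) = t := by
    simp only [smul_eq_mul]; field_simp; ring
  have hmem1 : lam * t ∈ Set.Ici (0:ℝ) := Set.mem_Ici.mpr (by positivity)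
  have hmem2 : (0:ℝ) ∈ Set.Ici (0:ℝ) := Set.mem_Ici.mpr le_rfl
  have hd1 : (0:ℝ) ≤ 1/lam := by positivity
  have hd2 : (0:ℝ) ≤ 1 - 1/lam := by
    have : 1/lam ≤ 1 := by rw [div_le_one hlam0]; exact hlam
    linarith
  have h2 := hA.convex.2 hmem1 hmem2 hd1 hd2 (by ring)
  rw [h1] at h2
  rw [hA.zero] at h2
  simp only [smul_eq_mul, mul_zero, add_zero] at h2
  have := mul_le_mul_of_nonneg_left h2 hlam0.le
  calc lam * A t ≤ lam * (1/lam * A (lam * t)) := this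
    _ = A (lam * t) := by field_simp

lemma young_unbounded (hA : IsYoung A) (M : ℝ) : ∃ x, 0 ≤ x ∧ M < A x := by
  obtain ⟨t0, ht0, hAt0⟩ := hA.nontrivial
  set lam : ℝ := max 1 ((M + 1) / A t0) with hlam
  have h1 : (1:ℝ) ≤ lam := le_max_left _ _
  refine ⟨lam * t0, by positivity, ?_⟩
  have h2 := young_scale hA h1 ht0.le
  have h3 : (M + 1) / A t0 ≤ lam := le_max_right _ _
  have h4 : M + 1 ≤ lam * A t0 := by
    rw [div_le_iff₀ hAt0] at h3; linarith
  linarith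

end Young

section Nabla
variable {A : ℝ → ℝ} {c : ℝ}

lemma nabla_small_ratio (hA : IsYoung A) (hc : 2 < c)
    (hD : ∀ t ≥ (0:ℝ), c * A t ≤ A (2 * t)) :
    ∀ ε > (0:ℝ), ∃ t > (0:ℝ), A t < ε * t := by
  intro ε hε
  have hc0 : (0:ℝ) < c := by linarith
  have hiter : ∀ k : ℕ, c ^ k * A (1 / 2 ^ k) ≤ A 1 := by
    intro k
    induction k with
    | zero => simp
    | succ k ih =>
      have h1 : (0:ℝ) ≤ 1 / 2 ^ (k+1) := by positivity
      have h2 := hD _ h1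
      have h3 : 2 * (1 / 2 ^ (k+1)) = 1 / (2:ℝ) ^ k := by ring
      rw [h3] at h2
      have h4 := mul_le_mul_of_nonneg_left h2 (by positivity : (0:ℝ) ≤ c ^ k)
      calc c ^ (k+1) * A (1 / 2 ^ (k+1)) = c ^ k * (c * A (1 / 2 ^ (k+1))) := by ring
        _ ≤ c ^ k * A (1 / 2 ^ k) := h4
        _ ≤ A 1 := ih
  have hk : ∃ k : ℕ, A 1 * (2 / c) ^ k < ε := by
    rcases le_or_gt (A 1) 0 with h | h
    · exact ⟨0, by simpa using lt_of_le_of_lt h hε⟩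
    · obtain ⟨k, hk⟩ := exists_pow_lt_of_lt_one (x := ε / A 1) (y := 2 / c) (by positivity)
        (by rw [div_lt_one hc0]; linarith)
      exact ⟨k, by rw [← lt_div_iff₀' h]; exact hk⟩
  obtain ⟨k, hk⟩ := hk
  refine ⟨1 / 2 ^ k, by positivity, ?_⟩
  have h5 := hiter k
  have hck : (0:ℝ) < c ^ k := by positivity
  have h2k : (0:ℝ) < (2:ℝ) ^ k := by positivity
  have h6 : A (1 / 2 ^ k) ≤ A 1 / c ^ k := by
    rw [le_div_iff₀ hck]; linarith [h5]
  have h8 : A 1 * 2 ^ k < ε * c ^ k := by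
    rw [div_pow, ← mul_div_assoc, div_lt_iff₀ hck] at hk
    linarith [hk]
  have h7 : A 1 / c ^ k < ε / 2 ^ k := by
    rw [div_lt_div_iff₀ hck h2k]; exact h8
  have : ε / 2 ^ k = ε * (1 / 2 ^ k) := by ring
  linarith
end Nabla

section Interp
variable {A : ℝ → ℝ} {c : ℝ}

lemma nabla_interp (hA : IsYoung A) (hc : 2 < c)
    (hD : ∀ t ≥ (0:ℝ), c * A t ≤ A (2 * t)) {lam : ℝ} (h1 : 1 < lam) (h2 : lam ≤ 2) :
    lam < c * lam / (2 * (c - 1) - lam * (c - 2)) ∧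
      ∀ t, 0 ≤ t → (c * lam / (2 * (c - 1) - lam * (c - 2))) * A t ≤ A (lam * t) := by
  have hc0 : (0:ℝ) < c := by linarith
  set denom : ℝ := 2 * (c - 1) - lam * (c - 2) with hdenom
  have hden : 0 < denom := by nlinarith
  constructor
  · rw [lt_div_iff₀ hden]
    nlinarith [mul_pos (show (0:ℝ) < lam by linarith)
      (mul_pos (sub_pos.mpr h1) (sub_pos.mpr hc))]
  · intro t ht
    set a : ℝ := (2 - lam) / lam with ha
    set b : ℝ := 1 - a with hb
    have hlam0 : (0:ℝ) < lam := by linarith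
    have ha0 : 0 ≤ a := by
      apply div_nonneg <;> linarith
    have hb0 : 0 ≤ b := by
      rw [hb, ha, sub_nonneg, div_le_one hlam0]; linarith
    have hx : lam * t ∈ Set.Ici (0:ℝ) := Set.mem_Ici.mpr (by positivity)
    have hy : lam * t / 2 ∈ Set.Ici (0:ℝ) := Set.mem_Ici.mpr (by positivity)
    have hconv := hA.convex.2 hx hy ha0 hb0 (by rw [hb]; ring)
    have hcomb : a • (lam * t) + b • (lam * t / 2) = t := by
      simp only [smul_eq_mul, ha, hb]
      field_simp
      ring
    rw [hcomb] at hconv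
    simp only [smul_eq_mul] at hconv
    have hnab := hD (lam * t / 2) (by positivity)
    have h2y : 2 * (lam * t / 2) = lam * t := by ring
    rw [h2y] at hnab
    have hAy : A (lam * t / 2) ≤ A (lam * t) / c := by
      rw [le_div_iff₀ hc0]; linarith
    have key : A t ≤ (a + b / c) * A (lam * t) := by
      have : b * A (lam * t / 2) ≤ b * (A (lam * t) / c) :=
        mul_le_mul_of_nonneg_left hAy hb0
      calc A t ≤ a * A (lam * t) + b * A (lam * t / 2) := hconv
        _ ≤ a * A (lam * t) + b * (A (lam * t) / c) := by linarith
        _ = (a + b / c) * A (lam * t) := by ring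
    have hmu0 : 0 ≤ c * lam / denom := by positivity
    have hident : (c * lam / denom) * (a + b / c) = 1 := by
      rw [ha, hb, ha]
      field_simp
      ring
    calc (c * lam / denom) * A t ≤ (c * lam / denom) * ((a + b / c) * A (lam * t)) :=
          mul_le_mul_of_nonneg_left key hmu0
      _ = ((c * lam / denom) * (a + b / c)) * A (lam * t) := by ring
      _ = A (lam * t) := by rw [hident, one_mul]
end Interp

section Einv
variable {A : ℝ → ℝ}

lemma einv_mono {t u : ℝ≥0∞} (h : t ≤ u) : einv A t ≤ einv A u :=
  sInf_le_sInf (fun _ hx => lt_of_le_of_lt h hx)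

lemma einv_top : einv A ⊤ = ⊤ := by
  have h : {x : ℝ≥0∞ | (⊤:ℝ≥0∞) < ENNReal.ofReal (A x.toReal)} = ∅ := by
    ext x
    simp only [Set.mem_setOf_eq, Set.mem_empty_iff_false, iff_false, not_lt]
    exact le_top
  rw [einv, h, sInf_empty]

lemma einv_mem_ne_top (hA : IsYoung A) {t : ℝ≥0∞} {x : ℝ≥0∞}
    (hx : t < ENNReal.ofReal (A x.toReal)) : x ≠ ⊤ := by
  intro h
  rw [h] at hx
  simp only [ENNReal.toReal_top, hA.zero, ENNReal.ofReal_zero] at hx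
  exact (not_lt_of_ge (zero_le : (0:ℝ≥0∞) ≤ t)) hx

lemma einv_lt_top (hA : IsYoung A) {t : ℝ≥0∞} (ht : t ≠ ⊤) : einv A t < ⊤ := by
  obtain ⟨x, hx0, hx⟩ := young_unbounded hA (t.toReal + 1)
  have hmem : (ENNReal.ofReal x) ∈ {y : ℝ≥0∞ | t < ENNReal.ofReal (A y.toReal)} := by
    simp only [Set.mem_setOf_eq, ENNReal.toReal_ofReal hx0]
    have h1 : t = ENNReal.ofReal t.toReal := (ENNReal.ofReal_toReal ht).symm
    rw [h1]
    exact (ENNReal.ofReal_lt_ofReal_iff (by linarith [ENNReal.toReal_nonneg (a := t)])).mpr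
      (by linarith [ENNReal.toReal_nonneg (a := t)])
  exact lt_of_le_of_lt (sInf_le hmem) ENNReal.ofReal_lt_top

lemma einv_pos (hA : IsYoung A) {t : ℝ≥0∞} (ht : 0 < t) : 0 < einv A t := by
  rcases eq_or_ne t ⊤ with h | h
  · rw [h, einv_top]; exact ENNReal.zero_lt_top
  · set tr := t.toReal with htr'
    have htr : 0 < tr := ENNReal.toReal_pos ht.ne' h
    set K := A 1 with hK'
    have hK0 : 0 ≤ K := hA.nonneg 1 zero_le_one
    set η : ℝ := min 1 (tr / (K + 1)) with hη'
    have hη : 0 < η := lt_min one_pos (by positivity)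
    refine lt_of_lt_of_le (ENNReal.ofReal_pos.mpr hη) (le_sInf ?_)
    intro x hx
    simp only [Set.mem_setOf_eq] at hx
    by_contra hlt
    push_neg at hlt
    have hxtop : x ≠ ⊤ := (hlt.trans ENNReal.ofReal_lt_top).ne
    set xr := x.toReal with hxr'
    have hxr : xr < η := by
      have := (ENNReal.toReal_lt_toReal hxtop ENNReal.ofReal_ne_top).mpr hlt
      rwa [ENNReal.toReal_ofReal hη.le] at this
    have hxr0 : 0 ≤ xr := ENNReal.toReal_nonneg
    have hxr1 : xr ≤ 1 := le_of_lt (lt_of_lt_of_le hxr (min_le_left _ _))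
    -- A xr ≤ xr * K by convexity
    have hconv := hA.convex.2 (Set.mem_Ici.mpr zero_le_one) (Set.mem_Ici.mpr le_rfl)
      hxr0 (by linarith : (0:ℝ) ≤ 1 - xr) (by ring)
    simp only [smul_eq_mul, mul_one, mul_zero, add_zero, hA.zero] at hconv
    have hAxr : A xr ≤ xr * K := by simpa [hK'] using hconv
    have hle : η * (K + 1) ≤ tr := by
      have := min_le_right 1 (tr / (K + 1))
      calc η * (K + 1) ≤ (tr / (K + 1)) * (K + 1) := by
            apply mul_le_mul_of_nonneg_right ((min_le_right _ _)) (by positivity)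
        _ = tr := by field_simp
    have hAlt : A xr < tr := by nlinarith
    have hlt2 : ENNReal.ofReal (A xr) < t := by
      rw [← ENNReal.ofReal_toReal h]
      exact (ENNReal.ofReal_lt_ofReal_iff htr).mpr hAlt
    exact absurd hx (not_lt.mpr hlt2.le)

lemma einv_scale (hA : IsYoung A) {lam mu : ℝ} (hlam : 1 ≤ lam) (hmu : 0 < mu)
    (hineq : ∀ t, 0 ≤ t → mu * A t ≤ A (lam * t)) (w : ℝ≥0∞) :
    einv A (ENNReal.ofReal mu * w) ≤ ENNReal.ofReal lam * einv A w := by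
  have hlam0 : (0:ℝ) < lam := by linarith
  have hlamne : ENNReal.ofReal lam ≠ 0 := (ENNReal.ofReal_pos.mpr hlam0).ne'
  have hlamtop : ENNReal.ofReal lam ≠ ⊤ := ENNReal.ofReal_ne_top
  have key : ∀ x ∈ {x : ℝ≥0∞ | w < ENNReal.ofReal (A x.toReal)},
      einv A (ENNReal.ofReal mu * w) ≤ ENNReal.ofReal lam * x := by
    intro x hx
    simp only [Set.mem_setOf_eq] at hx
    have hxtop : x ≠ ⊤ := einv_mem_ne_top hA hx
    apply sInf_le
    simp only [Set.mem_setOf_eq]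
    have htoReal : (ENNReal.ofReal lam * x).toReal = lam * x.toReal := by
      rw [ENNReal.toReal_mul, ENNReal.toReal_ofReal hlam0.le]
    rw [htoReal]
    have h1 : ENNReal.ofReal mu * w < ENNReal.ofReal mu * ENNReal.ofReal (A x.toReal) :=
      by rw [mul_comm _ w, mul_comm _ (ENNReal.ofReal (A x.toReal))]
         exact ENNReal.mul_lt_mul_left (ENNReal.ofReal_pos.mpr hmu).ne' ENNReal.ofReal_ne_top hx
    have h2 : ENNReal.ofReal mu * ENNReal.ofReal (A x.toReal)
        ≤ ENNReal.ofReal (A (lam * x.toReal)) := by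
      rw [← ENNReal.ofReal_mul hmu.le]
      exact ENNReal.ofReal_le_ofReal (hineq _ ENNReal.toReal_nonneg)
    exact lt_of_lt_of_le h1 h2
  have h3 : einv A (ENNReal.ofReal mu * w) / ENNReal.ofReal lam ≤ einv A w := by
    apply le_sInf
    intro x hx
    rw [ENNReal.div_le_iff_le_mul (Or.inl hlamne) (Or.inl hlamtop),
      mul_comm x (ENNReal.ofReal lam)]
    exact key x hx
  rw [ENNReal.div_le_iff_le_mul (Or.inl hlamne) (Or.inl hlamtop),
    mul_comm (einv A w) (ENNReal.ofReal lam)] at h3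
  exact h3

end Einv

section Ratio
variable {A : ℝ → ℝ} {c : ℝ}

lemma einv_ratio_le (hA : IsYoung A) {ur vr : ℝ} (hu : 0 < ur) (huv : ur ≤ vr) :
    (einv A (ENNReal.ofReal vr)).toReal * ur ≤ (einv A (ENNReal.ofReal ur)).toReal * vr := by
  set lam := vr / ur with hlam'
  have hlam : 1 ≤ lam := (one_le_div hu).mpr huv
  have hineq : ∀ t, 0 ≤ t → lam * A t ≤ A (lam * t) := fun t ht => young_scale hA hlam ht
  have hsc := einv_scale hA hlam (by linarith : (0:ℝ) < lam) hineq (ENNReal.ofReal ur)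
  have heq : ENNReal.ofReal lam * ENNReal.ofReal ur = ENNReal.ofReal vr := by
    rw [← ENNReal.ofReal_mul (by linarith : (0:ℝ) ≤ lam)]
    congr 1
    rw [hlam', div_mul_cancel₀ _ hu.ne']
  rw [heq] at hsc
  have hfin1 : einv A (ENNReal.ofReal vr) ≠ ⊤ := (einv_lt_top hA ENNReal.ofReal_ne_top).ne
  have hfin2 : einv A (ENNReal.ofReal ur) ≠ ⊤ := (einv_lt_top hA ENNReal.ofReal_ne_top).ne
  have hsc' := (ENNReal.toReal_le_toReal hfin1 (by
      exact ENNReal.mul_ne_top ENNReal.ofReal_ne_top hfin2)).mpr hsc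
  rw [ENNReal.toReal_mul, ENNReal.toReal_ofReal (by linarith : (0:ℝ) ≤ lam)] at hsc'
  have := mul_le_mul_of_nonneg_right hsc' hu.le
  calc (einv A (ENNReal.ofReal vr)).toReal * ur
      ≤ lam * (einv A (ENNReal.ofReal ur)).toReal * ur := this
    _ = (einv A (ENNReal.ofReal ur)).toReal * (lam * ur) := by ring
    _ = (einv A (ENNReal.ofReal ur)).toReal * vr := by
        rw [hlam', div_mul_cancel₀ _ hu.ne']

lemma einv_ratio_lt (hA : IsYoung A) (hc : 2 < c)
    (hD : ∀ t ≥ (0:ℝ), c * A t ≤ A (2 * t)) {ur vr : ℝ} (hu : 0 < ur) (huv : ur < vr) :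
    (einv A (ENNReal.ofReal vr)).toReal * ur < (einv A (ENNReal.ofReal ur)).toReal * vr := by
  set r := vr / ur with hr'
  have hr : 1 < r := (one_lt_div hu).mpr huv
  have hden2 : 0 < c + r * (c - 2) := by nlinarith
  set lam := min 2 (2 * r * (c - 1) / (c + r * (c - 2))) with hlam'
  have h1lam : 1 < lam := by
    apply lt_min one_lt_two
    rw [lt_div_iff₀ hden2]
    nlinarith
  have hlam2 : lam ≤ 2 := min_le_left _ _
  obtain ⟨hmugt, hineq⟩ := nabla_interp hA hc hD h1lam hlam2
  set mu := c * lam / (2 * (c - 1) - lam * (c - 2)) with hmu'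
  have hden : 0 < 2 * (c - 1) - lam * (c - 2) := by nlinarith
  have hmu0 : 0 < mu := by positivity
  have hmu_le_r : mu ≤ r := by
    rw [hmu', div_le_iff₀ hden]
    have h2 : lam ≤ 2 * r * (c - 1) / (c + r * (c - 2)) := min_le_right _ _
    rw [le_div_iff₀ hden2] at h2
    nlinarith
  have hjump := einv_scale hA (le_of_lt h1lam) hmu0 hineq (ENNReal.ofReal ur)
  have hfinu : einv A (ENNReal.ofReal ur) ≠ ⊤ := (einv_lt_top hA ENNReal.ofReal_ne_top).ne
  have heq : ENNReal.ofReal mu * ENNReal.ofReal ur = ENNReal.ofReal (mu * ur) :=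
    (ENNReal.ofReal_mul hmu0.le).symm
  rw [heq] at hjump
  have hfinmu : einv A (ENNReal.ofReal (mu * ur)) ≠ ⊤ := (einv_lt_top hA ENNReal.ofReal_ne_top).ne
  have hjump' := (ENNReal.toReal_le_toReal hfinmu (by
      exact ENNReal.mul_ne_top ENNReal.ofReal_ne_top hfinu)).mpr hjump
  rw [ENNReal.toReal_mul, ENNReal.toReal_ofReal (by linarith : (0:ℝ) ≤ lam)] at hjump'
  -- ratio from mu*ur to vr
  have hmuur : 0 < mu * ur := by positivity
  have hmvr : mu * ur ≤ vr := by
    have := mul_le_mul_of_nonneg_right hmu_le_r hu.le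
    rw [hr'] at this
    calc mu * ur ≤ vr / ur * ur := this
      _ = vr := by field_simp
  have hR1 := einv_ratio_le hA hmuur hmvr
  -- positivity of einv at ur
  have hGpos : 0 < (einv A (ENNReal.ofReal ur)).toReal :=
    ENNReal.toReal_pos (einv_pos hA (ENNReal.ofReal_pos.mpr hu)).ne' hfinu
  have hvr : 0 < vr := lt_trans hu huv
  nlinarith [hR1, hjump', hGpos, ENNReal.toReal_nonneg (a := einv A (ENNReal.ofReal vr)),
    mul_pos hGpos hvr]
end Ratio

section Pos
variable {A N : ℝ → ℝ} {c : ℝ}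

lemma rcInv_lower (hN : IsYoung N) {t t1 : ℝ} (ht1 : 0 < t1) (h : t1 ≤ t) :
    min 1 (t1 / (N 1 + 1)) ≤ rcInv N t := by
  set K := N 1 with hK'
  have hK0 : 0 ≤ K := hN.nonneg 1 zero_le_one
  set η := min 1 (t1 / (K + 1)) with hη'
  have hη : 0 < η := lt_min one_pos (by positivity)
  apply le_csInf
  · obtain ⟨x, hx0, hx⟩ := young_unbounded hN t
    exact ⟨x, hx0, hx⟩
  · rintro x ⟨hx0, hxt⟩
    by_contra hlt
    push_neg at hlt
    have hx1 : x ≤ 1 := le_of_lt (lt_of_lt_of_le hlt (min_le_left _ _))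
    have hconv := hN.convex.2 (Set.mem_Ici.mpr zero_le_one) (Set.mem_Ici.mpr le_rfl)
      hx0 (by linarith : (0:ℝ) ≤ 1 - x) (by ring)
    simp only [smul_eq_mul, mul_one, mul_zero, add_zero, hN.zero] at hconv
    have hNx : N x ≤ x * K := by simpa [hK'] using hconv
    have hle : η * (K + 1) ≤ t1 := by
      calc η * (K + 1) ≤ (t1 / (K + 1)) * (K + 1) :=
            mul_le_mul_of_nonneg_right (min_le_right _ _) (by positivity)
        _ = t1 := by field_simp
    have : N x < t1 := by nlinarith
    linarith

lemma conjE_lower (A : ℝ → ℝ) (y : ℝ≥0∞) {t : ℝ} (ht : 0 ≤ t) :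
    y * ENNReal.ofReal t - ENNReal.ofReal (A t) ≤ conjE A y :=
  le_iSup (fun (p : {t : ℝ // 0 ≤ t}) =>
    y * ENNReal.ofReal p.1 - ENNReal.ofReal (A p.1)) ⟨t, ht⟩

lemma conjE_uniform_lower (hA : IsYoung A) (hc : 2 < c)
    (hD : ∀ t ≥ (0:ℝ), c * A t ≤ A (2 * t)) {y0 : ℝ≥0∞} (hy0 : 0 < y0) :
    ∃ e : ℝ, 0 < e ∧ ∀ y : ℝ≥0∞, y0 ≤ y → ENNReal.ofReal e ≤ conjE A y := by
  obtain ⟨ε, hε, hεle⟩ : ∃ ε : ℝ, 0 < ε ∧ ENNReal.ofReal ε ≤ y0 := by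
    rcases eq_or_ne y0 ⊤ with h | h
    · exact ⟨1, one_pos, by rw [h]; exact le_top⟩
    · exact ⟨y0.toReal, ENNReal.toReal_pos hy0.ne' h, (ENNReal.ofReal_toReal h).le⟩
  obtain ⟨t, ht, hAt⟩ := nabla_small_ratio hA hc hD (ε / 2) (by positivity)
  refine ⟨ε * t / 2, by positivity, ?_⟩
  intro y hy
  have h1 : ENNReal.ofReal (ε * t / 2) = ENNReal.ofReal (ε * t) - ENNReal.ofReal (ε * t / 2) := by
    rw [← ENNReal.ofReal_sub _ (by positivity)]
    congr 1
    ring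
  rw [h1]
  refine le_trans (tsub_le_tsub ?_ ?_) (conjE_lower A y ht.le)
  · calc ENNReal.ofReal (ε * t) = ENNReal.ofReal ε * ENNReal.ofReal t := ENNReal.ofReal_mul hε.le
      _ ≤ y0 * ENNReal.ofReal t := mul_le_mul_left hεle _
      _ ≤ y * ENNReal.ofReal t := mul_le_mul_left hy _
  · exact ENNReal.ofReal_le_ofReal (by linarith : A t ≤ ε * t / 2)

end Pos

section FlinPos
variable {A N : ℝ → ℝ} {c : ℝ}

lemma Flin_pos (hA : IsYoung A) (hN : IsYoung N) (hc : 2 < c)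
    (hD : ∀ t ≥ (0:ℝ), c * A t ≤ A (2 * t)) {q : ℝ} (hq : 0 ≤ q) {b : ℝ} (hb : 0 < b) :
    0 < ∫⁻ r in Set.Ioi b,
      conjE A (ENNReal.ofReal r *
          ∫⁻ ρ in Set.Ioc (0:ℝ) (1/r), ENNReal.ofReal (rcInv N (1/ρ))) *
        ENNReal.ofReal (r ^ (-q)) := by
  have hN1 : 0 ≤ N 1 := hN.nonneg 1 zero_le_one
  have hb1 : 0 < b + 1 := by linarith
  set η := min 1 ((b + 1) / (N 1 + 1)) with hη'
  have hη : 0 < η := lt_min one_pos (by positivity)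
  -- lower bound on inner integral
  have hJlb : ∀ r : ℝ, b < r → r ≤ b + 1 →
      ENNReal.ofReal η * ENNReal.ofReal (1 / (b + 1)) ≤
        ∫⁻ ρ in Set.Ioc (0:ℝ) (1/r), ENNReal.ofReal (rcInv N (1/ρ)) := by
    intro r hr1 hr2
    have hr0 : 0 < r := lt_trans hb hr1
    have hsub : Set.Ioc (0:ℝ) (1/(b+1)) ⊆ Set.Ioc 0 (1/r) :=
      Set.Ioc_subset_Ioc le_rfl (one_div_le_one_div_of_le hr0 hr2)
    have hpt : Set.indicator (Set.Ioc (0:ℝ) (1/(b+1))) (fun _ => ENNReal.ofReal η) ≤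
        fun ρ => ENNReal.ofReal (rcInv N (1/ρ)) := by
      apply Set.indicator_le
      rintro ρ ⟨hρ0, hρ⟩
      apply ENNReal.ofReal_le_ofReal
      apply rcInv_lower hN hb1
      rw [le_div_iff₀ hρ0]
      calc (b+1) * ρ ≤ (b+1) * (1/(b+1)) := mul_le_mul_of_nonneg_left hρ hb1.le
        _ = 1 := by field_simp
    calc ENNReal.ofReal η * ENNReal.ofReal (1 / (b + 1))
        = ENNReal.ofReal η * volume (Set.Ioc (0:ℝ) (1/(b+1))) := by
          rw [Real.volume_Ioc]; norm_num
      _ = ∫⁻ ρ, Set.indicator (Set.Ioc (0:ℝ) (1/(b+1))) (fun _ => ENNReal.ofReal η) ρ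
            ∂(volume.restrict (Set.Ioc (0:ℝ) (1/r))) := by
          rw [lintegral_indicator_const measurableSet_Ioc,
            Measure.restrict_apply measurableSet_Ioc,
            Set.inter_eq_left.mpr hsub]
      _ ≤ ∫⁻ ρ in Set.Ioc (0:ℝ) (1/r), ENNReal.ofReal (rcInv N (1/ρ)) :=
          lintegral_mono hpt
  -- uniform positivity of conjE on the relevant range
  set y0 : ℝ≥0∞ := ENNReal.ofReal b * (ENNReal.ofReal η * ENNReal.ofReal (1/(b+1))) with hy0'
  have hy0 : 0 < y0 := by
    apply ENNReal.mul_pos (ENNReal.ofReal_pos.mpr hb).ne'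
    exact (ENNReal.mul_pos (ENNReal.ofReal_pos.mpr hη).ne'
      (ENNReal.ofReal_pos.mpr (by positivity)).ne').ne'
  obtain ⟨e, he, hconj⟩ := conjE_uniform_lower hA hc hD hy0
  set C : ℝ≥0∞ := ENNReal.ofReal e * ENNReal.ofReal ((b+1) ^ (-q)) with hC'
  have hC : 0 < C := ENNReal.mul_pos (ENNReal.ofReal_pos.mpr he).ne'
    (ENNReal.ofReal_pos.mpr (Real.rpow_pos_of_pos hb1 _)).ne'
  have hkey : Set.indicator (Set.Ioc b (b+1)) (fun _ => C) ≤
      fun r => conjE A (ENNReal.ofReal r *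
          ∫⁻ ρ in Set.Ioc (0:ℝ) (1/r), ENNReal.ofReal (rcInv N (1/ρ))) *
        ENNReal.ofReal (r ^ (-q)) := by
    apply Set.indicator_le
    rintro r ⟨hr1, hr2⟩
    have hr0 : 0 < r := lt_trans hb hr1
    have h1 : y0 ≤ ENNReal.ofReal r *
        ∫⁻ ρ in Set.Ioc (0:ℝ) (1/r), ENNReal.ofReal (rcInv N (1/ρ)) :=
      mul_le_mul' (ENNReal.ofReal_le_ofReal hr1.le) (hJlb r hr1 hr2)
    have h2 : ENNReal.ofReal ((b+1) ^ (-q)) ≤ ENNReal.ofReal (r ^ (-q)) :=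
      ENNReal.ofReal_le_ofReal
        (Real.rpow_le_rpow_of_nonpos hr0 hr2 (neg_nonpos.mpr hq))
    exact mul_le_mul' (hconj _ h1) h2
  have hvol : volume (Set.Ioc b (b+1)) = 1 := by
    rw [Real.volume_Ioc]; norm_num
  calc (0:ℝ≥0∞) < C := hC
    _ = C * volume (Set.Ioc b (b+1)) := by rw [hvol, mul_one]
    _ = ∫⁻ r, Set.indicator (Set.Ioc b (b+1)) (fun _ => C) r
          ∂(volume.restrict (Set.Ioi b)) := by
        rw [lintegral_indicator_const measurableSet_Ioc,
          Measure.restrict_apply measurableSet_Ioc,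
          Set.inter_eq_left.mpr Set.Ioc_subset_Ioi_self]
    _ ≤ _ := lintegral_mono hkey
end FlinPos

noncomputable def Flin (A N : ℝ → ℝ) (n : ℕ) (s : ℝ) : ℝ≥0∞ :=
  ∫⁻ r in Set.Ioi (s ^ (-(((n:ℝ)-1)/n))),
    conjE A (ENNReal.ofReal r *
        ∫⁻ ρ in Set.Ioc (0:ℝ) (1/r), ENNReal.ofReal (rcInv N (1/ρ))) *
      ENNReal.ofReal (r ^ (-((n:ℝ)/((n:ℝ)-1) + 1)))

lemma Xi_eq (A N : ℝ → ℝ) (n : ℕ) (s : ℝ) :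
    Xi A N n s = (ENNReal.ofReal s)⁻¹ * Flin A N n s := rfl

section Compare
variable {A N : ℝ → ℝ} {c : ℝ} {n : ℕ}

lemma exp_nonneg (hn : 2 ≤ n) : 0 ≤ ((n:ℝ) - 1) / n := by
  have h2 : (2:ℝ) ≤ (n:ℝ) := by exact_mod_cast hn
  apply div_nonneg <;> linarith

lemma exp2_nonneg (hn : 2 ≤ n) : 0 ≤ (n:ℝ) / ((n:ℝ) - 1) + 1 := by
  have h2 : (2:ℝ) ≤ (n:ℝ) := by exact_mod_cast hn
  have : 0 ≤ (n:ℝ) / ((n:ℝ) - 1) := by apply div_nonneg <;> linarith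
  linarith

lemma Flin_mono (A N : ℝ → ℝ) (hn : 2 ≤ n) {s1 s2 : ℝ} (h1 : 0 < s1) (h12 : s1 ≤ s2) :
    Flin A N n s1 ≤ Flin A N n s2 := by
  have hle : s2 ^ (-(((n:ℝ) - 1) / n)) ≤ s1 ^ (-(((n:ℝ) - 1) / n)) :=
    Real.rpow_le_rpow_of_nonpos h1 h12 (neg_nonpos.mpr (exp_nonneg hn))
  exact lintegral_mono' (Measure.restrict_mono (Set.Ioi_subset_Ioi hle) le_rfl) le_rfl

lemma Flin_pos' (hA : IsYoung A) (hN : IsYoung N) (hc : 2 < c)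
    (hD : ∀ t ≥ (0:ℝ), c * A t ≤ A (2 * t)) (hn : 2 ≤ n) {s : ℝ} (hs : 0 < s) :
    0 < Flin A N n s :=
  Flin_pos hA hN hc hD (exp2_nonneg hn) (Real.rpow_pos_of_pos hs _)

lemma theta_le (hA : IsYoung A) (hn : 2 ≤ n) {s1 s2 : ℝ}
    (h1 : 0 < s1) (h12 : s1 ≤ s2) : Theta A N n s1 ≤ Theta A N n s2 := by
  have h2 : 0 < s2 := lt_of_lt_of_le h1 h12
  have hs1ne : ENNReal.ofReal s1 ≠ 0 := (ENNReal.ofReal_pos.mpr h1).ne'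
  have hs2ne : ENNReal.ofReal s2 ≠ 0 := (ENNReal.ofReal_pos.mpr h2).ne'
  set c0 := Flin A N n s2 with hc0'
  have hstep : Theta A N n s1 ≤
      ENNReal.ofReal s1 * einv A ((ENNReal.ofReal s1)⁻¹ * c0) := by
    apply mul_le_mul_right
    apply einv_mono
    rw [Xi_eq]
    exact mul_le_mul_right (Flin_mono A N hn h1 h12) _
  rcases eq_or_ne c0 ⊤ with htop | htop
  · have : Xi A N n s2 = ⊤ := by
      rw [Xi_eq, ← hc0', htop, ENNReal.mul_top]
      simp [ENNReal.inv_eq_zero]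
    have : Theta A N n s2 = ⊤ := by
      rw [Theta, this, einv_top, ENNReal.mul_top hs2ne]
    rw [this]; exact le_top
  rcases eq_or_ne c0 0 with hzero | hzero
  · refine le_trans hstep ?_
    rw [hzero, mul_zero]
    have : Xi A N n s2 = 0 := by rw [Xi_eq, ← hc0', hzero, mul_zero]
    rw [Theta, this]
    exact mul_le_mul_left (ENNReal.ofReal_le_ofReal h12) _
  · -- main case
    refine le_trans hstep ?_
    set u := (ENNReal.ofReal s2)⁻¹ * c0 with hu'
    set v := (ENNReal.ofReal s1)⁻¹ * c0 with hv'
    have hs1inv : (ENNReal.ofReal s1)⁻¹ ≠ 0 := by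
      simp [ENNReal.inv_eq_zero]
    have hs2inv : (ENNReal.ofReal s2)⁻¹ ≠ 0 := by
      simp [ENNReal.inv_eq_zero]
    have hs1invt : (ENNReal.ofReal s1)⁻¹ ≠ ⊤ := by
      simp [ENNReal.inv_eq_top, hs1ne]
    have hs2invt : (ENNReal.ofReal s2)⁻¹ ≠ ⊤ := by
      simp [ENNReal.inv_eq_top, hs2ne]
    have hune : u ≠ 0 := mul_ne_zero hs2inv hzero
    have hvne : v ≠ 0 := mul_ne_zero hs1inv hzero
    have hunt : u ≠ ⊤ := ENNReal.mul_ne_top hs2invt htop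
    have hvnt : v ≠ ⊤ := ENNReal.mul_ne_top hs1invt htop
    have hc0t : 0 < c0.toReal := ENNReal.toReal_pos hzero htop
    have hut : u.toReal = c0.toReal / s2 := by
      rw [hu', ENNReal.toReal_mul, ENNReal.toReal_inv, ENNReal.toReal_ofReal h2.le]
      ring
    have hvt : v.toReal = c0.toReal / s1 := by
      rw [hv', ENNReal.toReal_mul, ENNReal.toReal_inv, ENNReal.toReal_ofReal h1.le]
      ring
    have hu0 : 0 < u.toReal := by rw [hut]; positivity
    have huv : u.toReal ≤ v.toReal := by
      rw [hut, hvt]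
      gcongr
    have hratio := einv_ratio_le hA hu0 huv
    rw [ENNReal.ofReal_toReal hunt, ENNReal.ofReal_toReal hvnt] at hratio
    have hGu := (einv_lt_top hA hunt).ne
    have hGv := (einv_lt_top hA hvnt).ne
    have hgoal : (ENNReal.ofReal s1 * einv A v).toReal ≤
        (ENNReal.ofReal s2 * einv A u).toReal := by
      rw [ENNReal.toReal_mul, ENNReal.toReal_mul,
        ENNReal.toReal_ofReal h1.le, ENNReal.toReal_ofReal h2.le]
      rw [hut, hvt] at hratio
      set X := (einv A v).toReal
      set Y := (einv A u).toReal
      have hmul := mul_le_mul_of_nonneg_right hratio (by positivity : (0:ℝ) ≤ s1 * s2)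
      have e1 : X * (c0.toReal / s2) * (s1 * s2) = X * s1 * c0.toReal := by
        field_simp
      have e2 : Y * (c0.toReal / s1) * (s1 * s2) = Y * s2 * c0.toReal := by
        field_simp
      rw [e1, e2] at hmul
      have := le_of_mul_le_mul_right (by linarith : (s1 * X) * c0.toReal ≤ (s2 * Y) * c0.toReal) hc0t
      linarith
    have hne1 : ENNReal.ofReal s1 * einv A v ≠ ⊤ := ENNReal.mul_ne_top ENNReal.ofReal_ne_top hGv
    have hne2 : ENNReal.ofReal s2 * einv A u ≠ ⊤ := ENNReal.mul_ne_top ENNReal.ofReal_ne_top hGu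
    have := (ENNReal.toReal_le_toReal hne1 hne2).mp hgoal
    calc ENNReal.ofReal s1 * einv A v ≤ ENNReal.ofReal s2 * einv A u := this
      _ = Theta A N n s2 := by rw [Theta, Xi_eq, ← hc0', ← hu']
end Compare

section Strict
variable {A N : ℝ → ℝ} {c : ℝ} {n : ℕ}

lemma theta_lt (hA : IsYoung A) (hN : IsYoung N) (hc : 2 < c)
    (hD : ∀ t ≥ (0:ℝ), c * A t ≤ A (2 * t)) (hn : 2 ≤ n) {s1 s2 : ℝ}
    (h1 : 0 < s1) (h12 : s1 < s2) (hfin : Flin A N n s2 ≠ ⊤) :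
    Theta A N n s1 < Theta A N n s2 := by
  have h2 : 0 < s2 := lt_trans h1 h12
  have hs1ne : ENNReal.ofReal s1 ≠ 0 := (ENNReal.ofReal_pos.mpr h1).ne'
  have hs2ne : ENNReal.ofReal s2 ≠ 0 := (ENNReal.ofReal_pos.mpr h2).ne'
  set c0 := Flin A N n s2 with hc0'
  have hzero : c0 ≠ 0 := (Flin_pos' hA hN hc hD hn h2).ne'
  have htop : c0 ≠ ⊤ := hfin
  have hstep : Theta A N n s1 ≤
      ENNReal.ofReal s1 * einv A ((ENNReal.ofReal s1)⁻¹ * c0) := by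
    apply mul_le_mul_right
    apply einv_mono
    rw [Xi_eq]
    exact mul_le_mul_right (Flin_mono A N hn h1 h12.le) _
  refine lt_of_le_of_lt hstep ?_
  set u := (ENNReal.ofReal s2)⁻¹ * c0 with hu'
  set v := (ENNReal.ofReal s1)⁻¹ * c0 with hv'
  have hs1inv : (ENNReal.ofReal s1)⁻¹ ≠ 0 := by simp [ENNReal.inv_eq_zero]
  have hs2inv : (ENNReal.ofReal s2)⁻¹ ≠ 0 := by simp [ENNReal.inv_eq_zero]
  have hs1invt : (ENNReal.ofReal s1)⁻¹ ≠ ⊤ := by simp [ENNReal.inv_eq_top, hs1ne]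
  have hs2invt : (ENNReal.ofReal s2)⁻¹ ≠ ⊤ := by simp [ENNReal.inv_eq_top, hs2ne]
  have hune : u ≠ 0 := mul_ne_zero hs2inv hzero
  have hvne : v ≠ 0 := mul_ne_zero hs1inv hzero
  have hunt : u ≠ ⊤ := ENNReal.mul_ne_top hs2invt htop
  have hvnt : v ≠ ⊤ := ENNReal.mul_ne_top hs1invt htop
  have hc0t : 0 < c0.toReal := ENNReal.toReal_pos hzero htop
  have hut : u.toReal = c0.toReal / s2 := by
    rw [hu', ENNReal.toReal_mul, ENNReal.toReal_inv, ENNReal.toReal_ofReal h2.le]; ring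
  have hvt : v.toReal = c0.toReal / s1 := by
    rw [hv', ENNReal.toReal_mul, ENNReal.toReal_inv, ENNReal.toReal_ofReal h1.le]; ring
  have hu0 : 0 < u.toReal := by rw [hut]; positivity
  have huv : u.toReal < v.toReal := by
    rw [hut, hvt]
    exact div_lt_div_of_pos_left hc0t h1 h12
  have hratio := einv_ratio_lt hA hc hD hu0 huv
  rw [ENNReal.ofReal_toReal hunt, ENNReal.ofReal_toReal hvnt] at hratio
  have hGu := (einv_lt_top hA hunt).ne
  have hGv := (einv_lt_top hA hvnt).ne
  have hgoal : (ENNReal.ofReal s1 * einv A v).toReal <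
      (ENNReal.ofReal s2 * einv A u).toReal := by
    rw [ENNReal.toReal_mul, ENNReal.toReal_mul,
      ENNReal.toReal_ofReal h1.le, ENNReal.toReal_ofReal h2.le]
    rw [hut, hvt] at hratio
    set X := (einv A v).toReal
    set Y := (einv A u).toReal
    have hmul := mul_lt_mul_of_pos_right hratio (by positivity : (0:ℝ) < s1 * s2)
    have e1 : X * (c0.toReal / s2) * (s1 * s2) = X * s1 * c0.toReal := by
      field_simp
    have e2 : Y * (c0.toReal / s1) * (s1 * s2) = Y * s2 * c0.toReal := by
      field_simp
    rw [e1, e2] at hmul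
    have := lt_of_mul_lt_mul_right (by linarith : (s1 * X) * c0.toReal < (s2 * Y) * c0.toReal)
      hc0t.le
    linarith
  have hne1 : ENNReal.ofReal s1 * einv A v ≠ ⊤ := ENNReal.mul_ne_top ENNReal.ofReal_ne_top hGv
  have hne2 : ENNReal.ofReal s2 * einv A u ≠ ⊤ := ENNReal.mul_ne_top ENNReal.ofReal_ne_top hGu
  have := (ENNReal.toReal_lt_toReal hne1 hne2).mp hgoal
  calc ENNReal.ofReal s1 * einv A v < ENNReal.ofReal s2 * einv A u := this
    _ = Theta A N n s2 := by rw [Theta, Xi_eq, ← hc0', ← hu']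
end Strict

lemma lintegral_rpow_neg_top {b p : ℝ} (hb : 0 < b) (hp : 1 < p) :
    ∫⁻ x in Set.Ioc (0:ℝ) b, ENNReal.ofReal (x ^ (-p)) = ⊤ := by
  by_contra h
  have hlt : (∫⁻ x in Set.Ioc (0:ℝ) b, ENNReal.ofReal (x ^ (-p))) < ⊤ := lt_top_iff_ne_top.mpr h
  have heqset : volume.restrict (Set.Ioo (0:ℝ) b) = volume.restrict (Set.Ioc (0:ℝ) b) :=
    Measure.restrict_congr_set Ioo_ae_eq_Ioc
  have hint : IntegrableOn (fun x : ℝ => x ^ (-p)) (Set.Ioo 0 b) := by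
    constructor
    · apply ContinuousOn.aestronglyMeasurable ?_ measurableSet_Ioo
      exact ContinuousOn.rpow_const continuousOn_id (fun x hx => Or.inl (ne_of_gt hx.1))
    · rw [hasFiniteIntegral_iff_ofReal]
      · unfold IntegrableOn at *
        rw [heqset]
        exact hlt
      · rw [EventuallyLE, ae_restrict_iff' measurableSet_Ioo]
        exact ae_of_all _ (fun x hx => Real.rpow_nonneg hx.1.le _)
  have := (intervalIntegral.integrableOn_Ioo_rpow_iff hb).mp hint
  linarith

section Main
variable {A N : ℝ → ℝ} {c : ℝ} {n : ℕ}

lemma flin_ne_top (A N : ℝ → ℝ) (n : ℕ) {s : ℝ} (hs : 0 < s)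
    (h : Theta A N n s ≠ ⊤) : Flin A N n s ≠ ⊤ := by
  intro htop
  apply h
  have hsne : ENNReal.ofReal s ≠ 0 := (ENNReal.ofReal_pos.mpr hs).ne'
  have hXi : Xi A N n s = ⊤ := by
    rw [Xi_eq, htop, ENNReal.mul_top]
    simp [ENNReal.inv_eq_zero]
  rw [Theta, hXi, einv_top, ENNReal.mul_top hsne]

lemma exists_small (hA : IsYoung A) (hn : 2 ≤ n) {δ : ℝ} (hδ : 0 < δ)
    (hint : (∫⁻ s in Set.Ioc (0:ℝ) δ,
      ENNReal.ofReal (s ^ (-(((n:ℝ)-1)/n))) * einv A (Xi A N n s)) < ⊤)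
    {ε : ℝ≥0∞} (hε0 : ε ≠ 0) (hεtop : ε ≠ ⊤) :
    ∃ s ∈ Set.Ioo (0:ℝ) δ, Theta A N n s < ε := by
  by_contra hall
  push_neg at hall
  set a := ((n:ℝ) - 1) / n with ha'
  have ha : 0 ≤ a := exp_nonneg hn
  have hapos : 0 < a := by
    have h2 : (2:ℝ) ≤ (n:ℝ) := by exact_mod_cast hn
    rw [ha']
    apply div_pos <;> linarith
  set g : ℝ → ℝ≥0∞ := fun s => ε * ENNReal.ofReal (s ^ (-(a + 1))) with hg'
  have hpt : Set.indicator (Set.Ioc (0:ℝ) (δ/2)) g ≤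
      fun s => ENNReal.ofReal (s ^ (-a)) * einv A (Xi A N n s) := by
    apply Set.indicator_le
    rintro s ⟨hs0, hs2⟩
    have hsmem : s ∈ Set.Ioo (0:ℝ) δ := ⟨hs0, lt_of_le_of_lt hs2 (by linarith)⟩
    have hsne : ENNReal.ofReal s ≠ 0 := (ENNReal.ofReal_pos.mpr hs0).ne'
    have hTh := hall s hsmem
    have hdiv : ε / ENNReal.ofReal s ≤ einv A (Xi A N n s) := by
      rw [ENNReal.div_le_iff_le_mul (Or.inl hsne) (Or.inl ENNReal.ofReal_ne_top)]
      rw [mul_comm]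
      exact hTh
    have heq : g s = ENNReal.ofReal (s ^ (-a)) * (ε / ENNReal.ofReal s) := by
      rw [hg']
      simp only
      rw [div_eq_mul_inv, ← ENNReal.ofReal_inv_of_pos hs0,
        ← Real.rpow_neg_one s]
      have hrw : s ^ (-(a+1)) = s ^ (-a) * s ^ (-1:ℝ) := by
        rw [← Real.rpow_add hs0]
        congr 1
        ring
      rw [hrw, ENNReal.ofReal_mul (Real.rpow_nonneg hs0.le _)]
      ring
    rw [heq]
    exact mul_le_mul_right hdiv _
  have hsub : Set.Ioc (0:ℝ) (δ/2) ⊆ Set.Ioc (0:ℝ) δ :=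
    Set.Ioc_subset_Ioc le_rfl (by linarith)
  have hchain : (∫⁻ s in Set.Ioc (0:ℝ) (δ/2), g s) ≤
      ∫⁻ s in Set.Ioc (0:ℝ) δ, ENNReal.ofReal (s ^ (-a)) * einv A (Xi A N n s) := by
    calc (∫⁻ s in Set.Ioc (0:ℝ) (δ/2), g s)
        = ∫⁻ s, Set.indicator (Set.Ioc (0:ℝ) (δ/2)) g s
            ∂(volume.restrict (Set.Ioc (0:ℝ) δ)) := by
          rw [lintegral_indicator measurableSet_Ioc,
            Measure.restrict_restrict measurableSet_Ioc,
            Set.inter_eq_left.mpr hsub]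
      _ ≤ _ := lintegral_mono hpt
  have hdivg : (∫⁻ s in Set.Ioc (0:ℝ) (δ/2), g s) = ⊤ := by
    rw [hg']
    rw [lintegral_const_mul' ε _ hεtop]
    rw [lintegral_rpow_neg_top (by linarith : 0 < δ/2) (by linarith : 1 < a + 1)]
    exact ENNReal.mul_top hε0
  rw [hdivg] at hchain
  exact absurd (lt_of_le_of_lt hchain hint) (lt_irrefl ⊤)
end Main

theorem Theta_tendsto_zero_and_strictMono (n : ℕ) (hn : 2 ≤ n) (A N : ℝ → ℝ)
    (hA : IsYoung A) (hN : IsYoung N)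
    (hnabla : Nabla2Global A) (hG : CondG A N n) :
    Filter.Tendsto (Theta A N n) (nhdsWithin 0 (Set.Ioi 0)) (nhds 0) ∧
    ∃ sb > (0:ℝ), (∀ s ∈ Set.Ioo (0:ℝ) sb, Theta A N n s ≠ ⊤) ∧
      StrictMonoOn (Theta A N n) (Set.Ioo (0:ℝ) sb) := by
  obtain ⟨c, hc, hD⟩ := hnabla
  obtain ⟨δ, hδ, hint⟩ := hG
  constructor
  · rw [ENNReal.tendsto_nhds_zero]
    intro ε hε
    have hε'0 : min ε 1 ≠ 0 := by
      simp only [ne_eq, min_eq_iff]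
      rintro (⟨h, -⟩ | ⟨h, -⟩)
      · exact hε.ne' h
      · exact one_ne_zero h
    have hε't : min ε 1 ≠ ⊤ := by
      intro h
      have := min_le_right ε 1
      rw [h] at this
      exact absurd (le_antisymm le_top this).symm (by simp)
    obtain ⟨s0, hs0mem, hs0lt⟩ := exists_small hA hn hδ hint hε'0 hε't
    filter_upwards [Ioo_mem_nhdsGT_of_mem (Set.mem_Ico.mpr ⟨le_rfl, hs0mem.1⟩)] with s hs
    calc Theta A N n s ≤ Theta A N n s0 := theta_le hA hn hs.1 hs.2.le
      _ ≤ min ε 1 := hs0lt.le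
      _ ≤ ε := min_le_left _ _
  · obtain ⟨s0, hs0mem, hs0lt⟩ := exists_small (N := N) hA hn hδ hint
      (one_ne_zero) (ENNReal.one_ne_top)
    have hs0fin : Theta A N n s0 ≠ ⊤ := (lt_of_lt_of_le hs0lt le_top).ne
    refine ⟨s0, hs0mem.1, ?_, ?_⟩
    · intro s hs
      exact ((lt_of_le_of_lt (theta_le hA hn hs.1 hs.2.le)
        (lt_top_iff_ne_top.mpr hs0fin))).ne
    · intro s1 hs1 s2 hs2 h12
      apply theta_lt hA hN hc hD hn hs1.1 h12
      apply flin_ne_top A N n hs2.1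
      exact ((lt_of_le_of_lt (theta_le hA hn hs2.1 hs2.2.le)
        (lt_top_iff_ne_top.mpr hs0fin))).ne
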